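/- For every δ with 0 ≤ δ ≤ T, the time translates of the right piecewise-constant interpolant satisfy ∫_δ^T ‖c_h(t) − c_h(t − δ)‖² dt ≤ T·δ·( τ Σ_{i=1}^N ‖(cⁱ − c^{i−1})/τ‖² ). In particular, if τ Σ_{i=1}^N ‖(cⁱ − c^{i−1})/τ‖² ≤ M₁, then ∫_δ^T ‖c_h(t) − c_h(t − δ)‖² dt ≤ T·M₁·δ, so the translates tend to zero uniformly in the partition as δ → 0. -/

import Mathlib

open MeasureTheory

private lemma tele_sum {X : Type*} [AddCommGroup X] (c : ℕ → X) (j : ℕ) :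
    ∀ i, j ≤ i → ∑ k ∈ Finset.Ioc j i, (c k - c (k - 1)) = c i - c j := by
  intro i hi
  induction i, hi using Nat.le_induction with
  | base => simp
  | succ n hn ih =>
      rw [Finset.sum_Ioc_succ_top hn, ih]
      simp only [Nat.add_sub_cancel]
      abel

theorem interpolant_time_translate_bound
    (X : Type*) [NormedAddCommGroup X] [NormedSpace ℝ X]
    (T : ℝ) (hT : 0 < T) (N : ℕ) (hN : 0 < N) (τ : ℝ) (hτ : τ = T / N)
    (c : ℕ → X) (ch : ℝ → X)
    (hch : ∀ i ∈ Finset.Icc 1 N, ∀ t ∈ Set.Ioc (((i : ℝ) - 1) * τ) ((i : ℝ) * τ),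
      ch t = c i)
    (δ : ℝ) (hδ0 : 0 ≤ δ) (hδT : δ ≤ T) :
    (∫ t in Set.Ioc δ T, ‖ch t - ch (t - δ)‖ ^ 2) ≤
      T * δ * (τ * ∑ i ∈ Finset.Icc 1 N, ‖τ⁻¹ • (c i - c (i - 1))‖ ^ 2) := by
  have hτ0 : 0 < τ := by rw [hτ]; positivity
  have hNτ : (N : ℝ) * τ = T := by
    rw [hτ]; field_simp
  set Δ : ℕ → X := fun k => c k - c (k - 1) with hΔ
  set g : ℝ → X := fun t => ∑ k ∈ Finset.Icc 1 N,
      (Set.Ioc (((k : ℝ) - 1) * τ) (((k : ℝ) - 1) * τ + δ)).indicator (fun _ => Δ k) t with hg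
  set F : ℝ → ℝ := fun t => (N : ℝ) * ∑ k ∈ Finset.Icc 1 N,
      (Set.Ioc (((k : ℝ) - 1) * τ) (((k : ℝ) - 1) * τ + δ)).indicator (fun _ => ‖Δ k‖ ^ 2) t
      with hF
  -- index facts
  have idx : ∀ t ∈ Set.Ioc (0 : ℝ) T, 1 ≤ ⌈t / τ⌉₊ ∧ ⌈t / τ⌉₊ ≤ N ∧
      ((⌈t / τ⌉₊ : ℝ) - 1) * τ < t ∧ t ≤ (⌈t / τ⌉₊ : ℝ) * τ := by
    intro t ht
    have hd : 0 < t / τ := div_pos ht.1 hτ0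
    refine ⟨Nat.ceil_pos.2 hd, Nat.ceil_le.2 ?_, ?_, ?_⟩
    · rw [div_le_iff₀ hτ0, hNτ]; exact ht.2
    · have h1 : (⌈t / τ⌉₊ : ℝ) < t / τ + 1 := Nat.ceil_lt_add_one hd.le
      have h2 : (⌈t / τ⌉₊ : ℝ) * τ < (t / τ + 1) * τ := mul_lt_mul_of_pos_right h1 hτ0
      have h3 : (t / τ + 1) * τ = t + τ := by field_simp
      nlinarith
    · rw [← div_le_iff₀ hτ0]; exact Nat.le_ceil _
  -- Step 2: EqOn
  have heq : Set.EqOn (fun t => ch t - ch (t - δ)) g (Set.Ioc δ T) := by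
    intro t ht
    have ht0 : 0 < t := lt_of_le_of_lt hδ0 ht.1
    have htd : 0 < t - δ := sub_pos.2 ht.1
    set i := ⌈t / τ⌉₊ with hi
    set j := ⌈(t - δ) / τ⌉₊ with hj
    obtain ⟨hi1, hiN, hit1, hit2⟩ := idx t ⟨ht0, ht.2⟩
    obtain ⟨hj1, hjN, hjt1, hjt2⟩ := idx (t - δ) ⟨htd, by linarith [ht.2]⟩
    have hji : j ≤ i := Nat.ceil_mono ((div_le_div_iff_of_pos_right hτ0).2 (by linarith))
    have hcht : ch t = c i := hch i (Finset.mem_Icc.2 ⟨hi1, hiN⟩) t ⟨hit1, hit2⟩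
    have hchtd : ch (t - δ) = c j := hch j (Finset.mem_Icc.2 ⟨hj1, hjN⟩) (t - δ) ⟨hjt1, hjt2⟩
    have hsub : Finset.Ioc j i ⊆ Finset.Icc 1 N := by
      intro k hk
      rw [Finset.mem_Ioc] at hk
      rw [Finset.mem_Icc]
      omega
    have hmem : ∀ k ∈ Finset.Icc 1 N,
        (t ∈ Set.Ioc (((k : ℝ) - 1) * τ) (((k : ℝ) - 1) * τ + δ) ↔ k ∈ Finset.Ioc j i) := by
      intro k hk
      rw [Finset.mem_Icc] at hk
      rw [Finset.mem_Ioc, Set.mem_Ioc]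
      constructor
      · rintro ⟨h1, h2⟩
        constructor
        · -- j < k
          have hkm : ((k - 1 : ℕ) : ℝ) = (k : ℝ) - 1 := by
            push_cast [Nat.cast_sub hk.1]; ring
          have : (t - δ) / τ ≤ ((k - 1 : ℕ) : ℝ) := by
            rw [hkm, div_le_iff₀ hτ0]; linarith
          have := Nat.ceil_le.2 this
          omega
        · -- k ≤ i
          have h3 : (k : ℝ) - 1 < t / τ := by
            rw [lt_div_iff₀ hτ0]; linarith
          have h4 : t / τ ≤ (i : ℝ) := Nat.le_ceil _
          have : (k : ℝ) < (i : ℝ) + 1 := by linarith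
          exact_mod_cast Nat.lt_add_one_iff.mp (by exact_mod_cast this)
      · rintro ⟨h1, h2⟩
        constructor
        · -- ((k:ℝ)-1)*τ < t
          have hki : (k : ℝ) ≤ (i : ℝ) := by exact_mod_cast h2
          have h1' : (i : ℝ) < t / τ + 1 := Nat.ceil_lt_add_one (by positivity)
          have : ((k : ℝ) - 1) < t / τ := by linarith
          calc ((k : ℝ) - 1) * τ < (t / τ) * τ := mul_lt_mul_of_pos_right this hτ0
            _ = t := by field_simp
        · -- t ≤ ((k:ℝ)-1)*τ + δ
          have hjk : (j : ℝ) ≤ (k : ℝ) - 1 := by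
            have : (j : ℝ) + 1 ≤ (k : ℝ) := by exact_mod_cast h1
            linarith
          have h5 : (t - δ) / τ ≤ (j : ℝ) := Nat.le_ceil _
          have : (t - δ) / τ ≤ (k : ℝ) - 1 := le_trans h5 hjk
          rw [div_le_iff₀ hτ0] at this
          linarith
    have key : g t = ∑ k ∈ Finset.Ioc j i, Δ k := by
      show (∑ k ∈ Finset.Icc 1 N,
        (Set.Ioc (((k : ℝ) - 1) * τ) (((k : ℝ) - 1) * τ + δ)).indicator (fun _ => Δ k) t) = _
      rw [← Finset.sum_subset hsub (fun k hk hk' => ?_)]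
      · refine Finset.sum_congr rfl (fun k hk => ?_)
        rw [Set.indicator_of_mem ((hmem k (hsub hk)).2 hk)]
      · rw [Set.indicator_of_notMem (fun hmem' => hk' ((hmem k hk).1 hmem'))]
    simp only
    rw [hcht, hchtd, key, tele_sum c j i hji]
  -- Step 3: pointwise Cauchy-Schwarz bound
  have hpt : ∀ t, ‖g t‖ ^ 2 ≤ F t := by
    intro t
    have h1 : ‖g t‖ ≤ ∑ k ∈ Finset.Icc 1 N,
        ‖(Set.Ioc (((k : ℝ) - 1) * τ) (((k : ℝ) - 1) * τ + δ)).indicator (fun _ => Δ k) t‖ :=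
      norm_sum_le _ _
    have h2 : ‖g t‖ ^ 2 ≤ (∑ k ∈ Finset.Icc 1 N,
        ‖(Set.Ioc (((k : ℝ) - 1) * τ) (((k : ℝ) - 1) * τ + δ)).indicator (fun _ => Δ k) t‖) ^ 2 :=
      pow_le_pow_left₀ (norm_nonneg _) h1 2
    have h3 := Finset.sum_mul_sq_le_sq_mul_sq (Finset.Icc 1 N)
      (fun k => ‖(Set.Ioc (((k : ℝ) - 1) * τ) (((k : ℝ) - 1) * τ + δ)).indicator
        (fun _ => Δ k) t‖) (fun _ => (1 : ℝ))
    simp only [mul_one, one_pow, Finset.sum_const, Nat.card_Icc, Nat.add_sub_cancel,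
      nsmul_eq_mul] at h3
    have h4 : ∀ k : ℕ, ‖(Set.Ioc (((k : ℝ) - 1) * τ) (((k : ℝ) - 1) * τ + δ)).indicator
        (fun _ => Δ k) t‖ ^ 2 =
        (Set.Ioc (((k : ℝ) - 1) * τ) (((k : ℝ) - 1) * τ + δ)).indicator
          (fun _ => ‖Δ k‖ ^ 2) t := by
      intro k
      by_cases hmem : t ∈ Set.Ioc (((k : ℝ) - 1) * τ) (((k : ℝ) - 1) * τ + δ)
      · rw [Set.indicator_of_mem hmem, Set.indicator_of_mem hmem]
      · rw [Set.indicator_of_notMem hmem, Set.indicator_of_notMem hmem]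
        simp
    rw [hF]
    simp only [← h4]
    calc ‖g t‖ ^ 2 ≤ _ := h2
      _ ≤ _ := h3
      _ = _ := by rw [mul_comm]
  -- measurability / integrability
  have hgm : StronglyMeasurable g := by
    apply Finset.stronglyMeasurable_fun_sum
    intro k _
    exact stronglyMeasurable_const.indicator measurableSet_Ioc
  have hindint : ∀ k : ℕ, IntegrableOn
      ((Set.Ioc (((k : ℝ) - 1) * τ) (((k : ℝ) - 1) * τ + δ)).indicator (fun _ => ‖Δ k‖ ^ 2))
      (Set.Ioc δ T) := by
    intro k
    apply Integrable.integrableOn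
    rw [integrable_indicator_iff measurableSet_Ioc]
    exact integrableOn_const measure_Ioc_lt_top.ne
  have hFint : IntegrableOn F (Set.Ioc δ T) := by
    apply Integrable.const_mul
    exact integrable_finset_sum _ (fun k _ => hindint k)
  have hgint : IntegrableOn (fun t => ‖g t‖ ^ 2) (Set.Ioc δ T) := by
    apply Integrable.mono' hFint
    · exact ((hgm.norm.pow 2).aestronglyMeasurable)
    · refine ae_of_all _ (fun t => ?_)
      rw [Real.norm_eq_abs, abs_of_nonneg (by positivity)]
      exact hpt t
  -- put it together
  have heq2 : Set.EqOn (fun t => ‖ch t - ch (t - δ)‖ ^ 2) (fun t => ‖g t‖ ^ 2)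
      (Set.Ioc δ T) := fun t ht => by
    show ‖ch t - ch (t - δ)‖ ^ 2 = ‖g t‖ ^ 2
    rw [show ch t - ch (t - δ) = g t from heq ht]
  rw [setIntegral_congr_fun measurableSet_Ioc heq2]
  have step1 : (∫ t in Set.Ioc δ T, ‖g t‖ ^ 2) ≤ ∫ t in Set.Ioc δ T, F t :=
    setIntegral_mono_on hgint hFint measurableSet_Ioc (fun t _ => hpt t)
  have step2 : (∫ t in Set.Ioc δ T, F t) ≤ (N : ℝ) * ∑ k ∈ Finset.Icc 1 N, δ * ‖Δ k‖ ^ 2 := by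
    rw [hF]
    rw [integral_const_mul]
    have := integral_finset_sum (μ := volume.restrict (Set.Ioc δ T)) (Finset.Icc 1 N)
      (fun k _ => hindint k)
    rw [this]
    apply mul_le_mul_of_nonneg_left _ (by positivity)
    apply Finset.sum_le_sum
    intro k _
    rw [setIntegral_indicator measurableSet_Ioc, setIntegral_const, smul_eq_mul]
    have hvol : (volume (Set.Ioc δ T ∩
        Set.Ioc (((k : ℝ) - 1) * τ) (((k : ℝ) - 1) * τ + δ))).toReal ≤ δ := by
      have h1 : volume (Set.Ioc δ T ∩ Set.Ioc (((k : ℝ) - 1) * τ) (((k : ℝ) - 1) * τ + δ)) ≤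
          volume (Set.Ioc (((k : ℝ) - 1) * τ) (((k : ℝ) - 1) * τ + δ)) :=
        measure_mono Set.inter_subset_right
      have h2 : volume (Set.Ioc (((k : ℝ) - 1) * τ) (((k : ℝ) - 1) * τ + δ)) =
          ENNReal.ofReal δ := by rw [Real.volume_Ioc]; ring_nf
      calc (volume (Set.Ioc δ T ∩
            Set.Ioc (((k : ℝ) - 1) * τ) (((k : ℝ) - 1) * τ + δ))).toReal
          ≤ (ENNReal.ofReal δ).toReal := by
            apply ENNReal.toReal_mono (by simp) (h2 ▸ h1)
        _ = δ := ENNReal.toReal_ofReal hδ0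
    exact mul_le_mul_of_nonneg_right hvol (by positivity) |>.trans_eq rfl
  refine step1.trans (step2.trans ?_)
  -- final algebra
  have hrhs : T * δ * (τ * ∑ i ∈ Finset.Icc 1 N, ‖τ⁻¹ • (c i - c (i - 1))‖ ^ 2) =
      (N : ℝ) * ∑ k ∈ Finset.Icc 1 N, δ * ‖Δ k‖ ^ 2 := by
    have : ∀ i : ℕ, ‖τ⁻¹ • (c i - c (i - 1))‖ ^ 2 = τ⁻¹ ^ 2 * ‖Δ i‖ ^ 2 := by
      intro i
      rw [norm_smul, Real.norm_eq_abs, abs_of_pos (by positivity), mul_pow]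
    simp only [this]
    rw [← Finset.mul_sum, ← Finset.mul_sum]
    have hN' : (N : ℝ) ≠ 0 := Nat.cast_ne_zero.2 hN.ne'
    have hT' : T ≠ 0 := hT.ne'
    rw [hτ]
    field_simp
  rw [hrhs]
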